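/- arXiv:1305.0453 — 7 statements merged into one kernel-verified Lean document; each statement's English description precedes it below -/
import Mathlib

section
/- Error bound for the rounded forward Euler method (positive part of the FPSPACE-completeness theorem for LipIVP): Assume p ≥ n + 8L + M. Let a : ℕ → ℝ and h̃ : ℝ → ℝ satisfy h̃(0) = 0 and, for every natural number T < 2^p: |a(T) − g(T/2^p, h̃(T/2^p))| ≤ 2^(−(n+8L)), and h̃(T/2^p + Δ) = h̃(T/2^p) + Δ·a(T) for every Δ ∈ [0, 2^(−p)] (so h̃ is the Euler polygon with step size 2^(−p) whose slopes are computed with error at most 2^(−(n+8L))). Then for every t ∈ [0,1] one has |h̃(t) − h(t)| ≤ 2^(−n)·exp(4L(t − 1)); in particular |h̃(t) − h(t)| ≤ 2^(−n) for all t ∈ [0,1]. -/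
open Real Set

set_option maxHeartbeats 1000000 in
/-- Error bound for the rounded forward Euler method: the Euler polygon with step
size `2^(-p)` and slope error at most `2^(-(n+8L))` approximates the true solution
of the IVP within `2^(-n) * exp (4L(t-1))` on `[0,1]`. -/
theorem euler_method_error_bound
    (L M n p : ℕ) (hL : 1 ≤ L)
    (g : ℝ → ℝ → ℝ) (h : ℝ → ℝ)
    (hg_cont : Continuous fun q : ℝ × ℝ => g q.1 q.2)
    (hg_lip : ∀ t ∈ Icc (0:ℝ) 1, ∀ y₀ y₁ : ℝ,
      |g t y₀ - g t y₁| ≤ (L : ℝ) * |y₀ - y₁|)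
    (hg_bd : ∀ t ∈ Icc (0:ℝ) 1, ∀ y : ℝ, |g t y| ≤ 2 ^ M)
    (hg_mod : ∀ t ∈ Icc (0:ℝ) 1, ∀ t' ∈ Icc (0:ℝ) 1, |t - t'| ≤ (2:ℝ) ^ (-(p:ℤ)) →
      ∀ y : ℝ, |g t y - g t' y| ≤ (2:ℝ) ^ (-((n:ℤ) + 8 * L)))
    (hh0 : h 0 = 0)
    (hh : ∀ t ∈ Icc (0:ℝ) 1, HasDerivAt h (g t (h t)) t)
    (hp : n + 8 * L + M ≤ p)
    (a : ℕ → ℝ) (htil : ℝ → ℝ)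
    (htil0 : htil 0 = 0)
    (ha : ∀ T : ℕ, T < 2 ^ p →
      |a T - g ((T : ℝ) / 2 ^ p) (htil ((T : ℝ) / 2 ^ p))| ≤ (2:ℝ) ^ (-((n:ℤ) + 8 * L)))
    (hstep : ∀ T : ℕ, T < 2 ^ p → ∀ Δ ∈ Icc (0:ℝ) ((2:ℝ) ^ (-(p:ℤ))),
      htil ((T : ℝ) / 2 ^ p + Δ) = htil ((T : ℝ) / 2 ^ p) + Δ * a T) :
    ∀ t ∈ Icc (0:ℝ) 1,
      |htil t - h t| ≤ (2:ℝ) ^ (-(n:ℤ)) * Real.exp (4 * (L : ℝ) * (t - 1)) ∧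
      |htil t - h t| ≤ (2:ℝ) ^ (-(n:ℤ)) := by
  have h2p : (0:ℝ) < 2 ^ p := by positivity
  set ε : ℝ := (2:ℝ) ^ (-((n:ℤ) + 8 * L)) with hε_def
  set δ : ℝ := (2:ℝ) ^ (-(p:ℤ)) with hδ_def
  have hεpos : 0 < ε := by positivity
  have hδpos : 0 < δ := by positivity
  have hδ_eq : δ = 1 / 2 ^ p := by
    rw [hδ_def, zpow_neg, zpow_natCast, one_div]
  have hLpos : (0:ℝ) < L := by exact_mod_cast Nat.lt_of_lt_of_le Nat.zero_lt_one hL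
  have hL1 : (1:ℝ) ≤ L := by exact_mod_cast hL
  -- h is Lipschitz with constant 2^M on [0,1]
  have hLip : ∀ s ∈ Icc (0:ℝ) 1, ∀ t ∈ Icc (0:ℝ) 1, |h t - h s| ≤ 2 ^ M * |t - s| := by
    intro s hs t ht
    have := Convex.norm_image_sub_le_of_norm_hasDerivWithin_le
      (f := h) (f' := fun x => g x (h x)) (C := 2 ^ M) (s := Icc (0:ℝ) 1)
      (fun x hx => (hh x hx).hasDerivWithinAt)
      (fun x hx => by rw [Real.norm_eq_abs]; exact hg_bd x hx (h x))
      (convex_Icc 0 1) hs ht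
    simpa [Real.norm_eq_abs] using this
  have h2Mδ : (2:ℝ) ^ M * δ ≤ ε := by
    rw [hδ_def, hε_def, ← zpow_natCast (2:ℝ) M, ← zpow_add₀ (two_ne_zero)]
    apply zpow_le_zpow_right₀ one_le_two
    omega
  -- key one-step lemma
  have key : ∀ T : ℕ, T < 2 ^ p → ∀ t : ℝ,
      (T : ℝ) / 2 ^ p ≤ t → t ≤ (T : ℝ) / 2 ^ p + δ → t ≤ 1 →
      |htil ((T : ℝ) / 2 ^ p) - h ((T : ℝ) / 2 ^ p)| ≤
        ε * (Real.exp (4 * L * ((T : ℝ) / 2 ^ p)) - 1) →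
      |htil t - h t| ≤ ε * (Real.exp (4 * L * t) - 1) := by
    intro T hT t hst htδ ht1 hind
    set s : ℝ := (T : ℝ) / 2 ^ p with hs_def
    have hs0 : 0 ≤ s := by positivity
    have hs1 : s ≤ 1 := by
      rw [hs_def, div_le_one h2p]
      exact_mod_cast hT.le
    have hsub : Icc s t ⊆ Icc (0:ℝ) 1 := Icc_subset_Icc hs0 ht1
    -- pointwise derivative bound
    have hbound : ∀ x ∈ Icc s t,
        |a T - g x (h x)| ≤ L * |htil s - h s| + 3 * L * ε := by
      intro x hx
      have hx01 : x ∈ Icc (0:ℝ) 1 := hsub hx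
      have h1 : |a T - g s (htil s)| ≤ ε := ha T hT
      have h2 : |g s (htil s) - g s (h s)| ≤ L * |htil s - h s| :=
        hg_lip s ⟨hs0, hs1⟩ _ _
      have hxs : |s - x| ≤ δ := by
        rw [abs_sub_comm, abs_of_nonneg (by linarith [hx.1])]
        linarith [hx.2]
      have h3 : |g s (h s) - g x (h s)| ≤ ε := hg_mod s ⟨hs0, hs1⟩ x hx01 hxs _
      have h4 : |g x (h s) - g x (h x)| ≤ L * |h s - h x| := hg_lip x hx01 _ _
      have h5 : |h s - h x| ≤ 2 ^ M * δ := by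
        rw [abs_sub_comm]
        calc |h x - h s| ≤ 2 ^ M * |x - s| := hLip s ⟨hs0, hs1⟩ x hx01
          _ ≤ 2 ^ M * δ := by
            apply mul_le_mul_of_nonneg_left _ (by positivity)
            rw [abs_of_nonneg (by linarith [hx.1])]
            linarith [hx.2]
      have h6 : L * |h s - h x| ≤ L * ε := by
        apply mul_le_mul_of_nonneg_left _ hLpos.le
        linarith [h5, h2Mδ]
      have t1 : |a T - g x (h x)| ≤ |a T - g s (htil s)| + |g s (htil s) - g x (h x)| :=
        abs_sub_le _ _ _
      have t2 : |g s (htil s) - g x (h x)| ≤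
          |g s (htil s) - g s (h s)| + |g s (h s) - g x (h x)| := abs_sub_le _ _ _
      have t3 : |g s (h s) - g x (h x)| ≤
          |g s (h s) - g x (h s)| + |g x (h s) - g x (h x)| := abs_sub_le _ _ _
      nlinarith [h1, h2, h3, h4, h6, hεpos, hLpos]
    -- derivative of the difference on the step interval
    have hderiv : ∀ x ∈ Icc s t, HasDerivWithinAt (fun y => htil y - h y)
        (a T - g x (h x)) (Icc s t) x := by
      intro x hx
      have heq : ∀ y ∈ Icc s t, htil y = htil s + (y - s) * a T := by
        intro y hy
        have h' := hstep T hT (y - s) ⟨by linarith [hy.1], by linarith [hy.2]⟩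
        rw [← hs_def] at h'
        have hys : s + (y - s) = y := by ring
        rwa [hys] at h'
      have haff : HasDerivAt (fun y => htil s + (y - s) * a T) (a T) x := by
        have := (((hasDerivAt_id x).sub_const s).mul_const (a T)).const_add (htil s)
        simpa using this
      have htilD : HasDerivWithinAt htil (a T) (Icc s t) x :=
        (haff.hasDerivWithinAt).congr heq (heq x hx)
      exact htilD.sub ((hh x (hsub hx)).hasDerivWithinAt)
    have hmain := Convex.norm_image_sub_le_of_norm_hasDerivWithin_le
      hderiv (fun x hx => by rw [Real.norm_eq_abs]; exact hbound x hx)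
      (convex_Icc s t) (left_mem_Icc.mpr hst) (right_mem_Icc.mpr hst)
    rw [Real.norm_eq_abs, Real.norm_eq_abs, abs_of_nonneg (by linarith : (0:ℝ) ≤ t - s)]
      at hmain
    -- triangle inequality
    have htri : |htil t - h t| ≤ |htil s - h s| +
        (L * |htil s - h s| + 3 * L * ε) * (t - s) := by
      have := abs_sub_abs_le_abs_sub (htil t - h t) (htil s - h s)
      nlinarith [this, hmain]
    -- Gronwall-type step arithmetic
    have hd : (0:ℝ) ≤ t - s := by linarith
    have hexp : Real.exp (4 * L * s) * (1 + 4 * L * (t - s)) ≤ Real.exp (4 * L * t) := by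
      have h1 : 4 * (L:ℝ) * (t - s) + 1 ≤ Real.exp (4 * L * (t - s)) :=
        Real.add_one_le_exp _
      have h2 : Real.exp (4 * L * s) * Real.exp (4 * L * (t - s)) = Real.exp (4 * L * t) := by
        rw [← Real.exp_add]; ring_nf
      nlinarith [Real.exp_pos (4 * (L:ℝ) * s)]
    have hexp1 : (1:ℝ) ≤ Real.exp (4 * L * s) :=
      Real.one_le_exp (by positivity)
    have P1 := mul_le_mul_of_nonneg_right hind (mul_nonneg hLpos.le hd)
    have P2 := mul_le_mul_of_nonneg_left hexp hεpos.le
    have Q1 : (0:ℝ) ≤ (L:ℝ) * ε * (t - s) * (Real.exp (4 * L * s) - 1) :=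
      mul_nonneg (mul_nonneg (mul_nonneg hLpos.le hεpos.le) hd) (by linarith)
    have Q2 : (0:ℝ) ≤ (L:ℝ) * ε * (t - s) := mul_nonneg (mul_nonneg hLpos.le hεpos.le) hd
    nlinarith [P1, P2, Q1, Q2, htri, hind]
  -- induction on grid points
  have grid : ∀ T : ℕ, T ≤ 2 ^ p →
      |htil ((T : ℝ) / 2 ^ p) - h ((T : ℝ) / 2 ^ p)| ≤
        ε * (Real.exp (4 * L * ((T : ℝ) / 2 ^ p)) - 1) := by
    intro T
    induction T with
    | zero => intro _; simp [htil0, hh0]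
    | succ T ih =>
      intro hT1
      have hT : T < 2 ^ p := by omega
      have hnext : ((T:ℝ) + 1) / 2 ^ p = (T:ℝ) / 2 ^ p + δ := by
        rw [hδ_eq]; ring
      have ht1 : ((T:ℝ) + 1) / 2 ^ p ≤ 1 := by
        rw [div_le_one h2p]
        have : ((T:ℕ) + 1 : ℝ) ≤ ((2:ℝ)) ^ p := by exact_mod_cast hT1
        push_cast at this ⊢; linarith
      have hres := key T hT (((T:ℝ) + 1) / 2 ^ p)
        (by rw [hnext]; linarith [hδpos]) (le_of_eq hnext) ht1 (ih hT.le)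
      push_cast
      exact hres
  -- bound at an arbitrary point of [0,1]
  intro t ht
  have hmain : |htil t - h t| ≤ ε * (Real.exp (4 * L * t) - 1) := by
    rcases eq_or_lt_of_le ht.2 with h1 | h1
    · have hg := grid (2 ^ p) le_rfl
      have h2 : ((2 ^ p : ℕ) : ℝ) / 2 ^ p = 1 := by
        push_cast; field_simp
      rw [h2] at hg
      rw [h1]
      exact hg
    · set T : ℕ := ⌊t * 2 ^ p⌋₊ with hT_def
      have htpos : 0 ≤ t * 2 ^ p := mul_nonneg ht.1 h2p.le
      have hTle : (T:ℝ) ≤ t * 2 ^ p := Nat.floor_le htpos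
      have hTlt : t * 2 ^ p < T + 1 := Nat.lt_floor_add_one _
      have hT2 : T < 2 ^ p := by
        have hx : t * 2 ^ p < ((2 ^ p : ℕ) : ℝ) := by push_cast; nlinarith
        exact (Nat.floor_lt htpos).mpr hx
      apply key T hT2 t
      · rw [div_le_iff₀ h2p]; exact hTle
      · rw [hδ_eq, ← add_div, le_div_iff₀ h2p]
        linarith
      · exact ht.2
      · exact grid T hT2.le
  -- convert to the stated bounds
  have hsplit : ε = (2:ℝ) ^ (-(n:ℤ)) * (2:ℝ) ^ (-(8 * (L:ℤ))) := by
    rw [hε_def, ← zpow_add₀ (two_ne_zero : (2:ℝ) ≠ 0)]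
    push_cast
    ring_nf
  have h28 : (2:ℝ) ^ (-(8 * (L:ℤ))) * Real.exp (4 * L) ≤ 1 := by
    have hlog : (0.6931471803 : ℝ) < Real.log 2 := Real.log_two_gt_d9
    have hle : Real.exp (4 * (L:ℝ)) ≤ Real.exp ((8 * L : ℕ) * Real.log 2) := by
      apply Real.exp_le_exp.mpr
      push_cast
      nlinarith
    have he2 : Real.exp ((8 * L : ℕ) * Real.log 2) = (2:ℝ) ^ (8 * L : ℕ) := by
      rw [Real.exp_nat_mul, Real.exp_log two_pos]
    rw [zpow_neg, inv_mul_le_iff₀ (by positivity), mul_one]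
    calc Real.exp (4 * (L:ℝ)) ≤ (2:ℝ) ^ (8 * L : ℕ) := by rw [← he2]; exact hle
      _ = (2:ℝ) ^ (8 * (L:ℤ)) := by rw [← zpow_natCast]; push_cast; ring_nf
  have hexp_shift : Real.exp (4 * (L:ℝ) * t) =
      Real.exp (4 * L) * Real.exp (4 * L * (t - 1)) := by
    rw [← Real.exp_add]; ring_nf
  have hb1 : |htil t - h t| ≤ (2:ℝ) ^ (-(n:ℤ)) * Real.exp (4 * (L:ℝ) * (t - 1)) := by
    have hφle : ε * (Real.exp (4 * L * t) - 1) ≤ ε * Real.exp (4 * L * t) := by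
      nlinarith
    calc |htil t - h t| ≤ ε * Real.exp (4 * L * t) := hmain.trans hφle
      _ = (2:ℝ) ^ (-(n:ℤ)) * ((2:ℝ) ^ (-(8 * (L:ℤ))) * Real.exp (4 * L)) *
          Real.exp (4 * L * (t - 1)) := by
          rw [hsplit, hexp_shift]; push_cast; ring
      _ ≤ (2:ℝ) ^ (-(n:ℤ)) * 1 * Real.exp (4 * L * (t - 1)) := by
          apply mul_le_mul_of_nonneg_right _ (Real.exp_pos _).le
          apply mul_le_mul_of_nonneg_left h28 (by positivity)
      _ = (2:ℝ) ^ (-(n:ℤ)) * Real.exp (4 * (L:ℝ) * (t - 1)) := by ring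
  refine ⟨hb1, ?_⟩
  have hle1 : Real.exp (4 * (L:ℝ) * (t - 1)) ≤ 1 := by
    rw [Real.exp_le_one_iff]
    nlinarith [ht.2, hLpos]
  calc |htil t - h t| ≤ (2:ℝ) ^ (-(n:ℤ)) * Real.exp (4 * (L:ℝ) * (t - 1)) := hb1
    _ ≤ (2:ℝ) ^ (-(n:ℤ)) * 1 := by
        apply mul_le_mul_of_nonneg_left hle1 (by positivity)
    _ = (2:ℝ) ^ (-(n:ℤ)) := mul_one _
end

section
/- Pointwise slope-error estimate for the rounded Euler method: Assume p ≥ n + 8L + M. Let T be a natural number with T < 2^p, and let v, w ∈ ℝ satisfy |v − h(T/2^p)| ≤ 2^(−n)·exp(4L(T/2^p − 1)) and |w − g(T/2^p, v)| ≤ 2^(−(n+8L)). Then for every τ ∈ [T/2^p, (T+1)/2^p], one has |w − g(τ, h(τ))| ≤ 4L·2^(−n)·exp(4L(T/2^p − 1)). -/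
open Real Set

/-- Pointwise slope-error estimate for the rounded Euler method. -/
theorem euler_method_slope_error
    (L M n p : ℕ) (hL : 1 ≤ L)
    (g : ℝ → ℝ → ℝ) (h : ℝ → ℝ)
    (hg_cont : Continuous fun q : ℝ × ℝ => g q.1 q.2)
    (hg_lip : ∀ t ∈ Icc (0:ℝ) 1, ∀ y₀ y₁ : ℝ,
      |g t y₀ - g t y₁| ≤ (L : ℝ) * |y₀ - y₁|)
    (hg_bd : ∀ t ∈ Icc (0:ℝ) 1, ∀ y : ℝ, |g t y| ≤ 2 ^ M)
    (hg_mod : ∀ t ∈ Icc (0:ℝ) 1, ∀ t' ∈ Icc (0:ℝ) 1, |t - t'| ≤ (2:ℝ) ^ (-(p:ℤ)) →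
      ∀ y : ℝ, |g t y - g t' y| ≤ (2:ℝ) ^ (-((n:ℤ) + 8 * L)))
    (hh0 : h 0 = 0)
    (hh : ∀ t ∈ Icc (0:ℝ) 1, HasDerivAt h (g t (h t)) t)
    (hp : n + 8 * L + M ≤ p)
    (T : ℕ) (hT : T < 2 ^ p) (v w : ℝ)
    (hv : |v - h ((T : ℝ) / 2 ^ p)| ≤
      (2:ℝ) ^ (-(n:ℤ)) * Real.exp (4 * (L : ℝ) * ((T : ℝ) / 2 ^ p - 1)))
    (hw : |w - g ((T : ℝ) / 2 ^ p) v| ≤ (2:ℝ) ^ (-((n:ℤ) + 8 * L))) :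
    ∀ τ ∈ Icc ((T : ℝ) / 2 ^ p) (((T : ℝ) + 1) / 2 ^ p),
      |w - g τ (h τ)| ≤
        4 * (L : ℝ) * (2:ℝ) ^ (-(n:ℤ)) * Real.exp (4 * (L : ℝ) * ((T : ℝ) / 2 ^ p - 1)) := by
  intro τ hτ
  have hp2 : (0:ℝ) < 2 ^ p := by positivity
  set t₀ : ℝ := (T:ℝ) / 2 ^ p with ht₀def
  set E : ℝ := Real.exp (4 * (L : ℝ) * (t₀ - 1)) with hEdef
  set ε : ℝ := (2:ℝ) ^ (-((n:ℤ) + 8 * L)) with hεdef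
  have hT1 : (T:ℝ) + 1 ≤ 2 ^ p := by
    have : (T : ℕ) + 1 ≤ 2 ^ p := hT
    exact_mod_cast this
  have ht₀0 : 0 ≤ t₀ := by positivity
  have hub1 : ((T:ℝ) + 1) / 2 ^ p ≤ 1 := by
    rw [div_le_one hp2]; exact hT1
  have ht₀1 : t₀ ≤ 1 := le_trans (le_trans hτ.1 hτ.2) hub1
  have hτmem : τ ∈ Icc (0:ℝ) 1 := ⟨le_trans ht₀0 hτ.1, le_trans hτ.2 hub1⟩
  have ht₀mem : t₀ ∈ Icc (0:ℝ) 1 := ⟨ht₀0, ht₀1⟩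
  have hmem : ∀ x ∈ Icc t₀ τ, x ∈ Icc (0:ℝ) 1 := fun x hx =>
    ⟨le_trans ht₀0 hx.1, le_trans hx.2 hτmem.2⟩
  -- gap bound
  have hgap : τ - t₀ ≤ (2:ℝ) ^ (-(p:ℤ)) := by
    have : τ - t₀ ≤ ((T:ℝ) + 1) / 2 ^ p - (T:ℝ) / 2 ^ p := by
      have := hτ.2; linarith
    have h2 : ((T:ℝ) + 1) / 2 ^ p - (T:ℝ) / 2 ^ p = (2:ℝ) ^ (-(p:ℤ)) := by
      rw [zpow_neg, zpow_natCast]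
      field_simp
      ring
    linarith [this, h2.le]
  have hgap0 : 0 ≤ τ - t₀ := by linarith [hτ.1]
  have hL1 : (1:ℝ) ≤ (L:ℝ) := by exact_mod_cast hL
  -- MVT estimate on h
  have hmvt : ‖h τ - h t₀‖ ≤ (2:ℝ) ^ M * (τ - t₀) :=
    norm_image_sub_le_of_norm_deriv_le_segment'
      (f := h) (f' := fun x => g x (h x)) (C := (2:ℝ) ^ M)
      (fun x hx => (hh x (hmem x hx)).hasDerivWithinAt)
      (fun x hx => by
        rw [Real.norm_eq_abs]
        exact hg_bd x (hmem x (Ico_subset_Icc_self hx)) (h x))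
      τ (right_mem_Icc.2 hτ.1)
  have hhdiff : |h τ - h t₀| ≤ ε := by
    rw [← Real.norm_eq_abs]
    calc ‖h τ - h t₀‖ ≤ (2:ℝ) ^ M * (τ - t₀) := hmvt
      _ ≤ (2:ℝ) ^ M * (2:ℝ) ^ (-(p:ℤ)) := by
          apply mul_le_mul_of_nonneg_left hgap (by positivity)
      _ = (2:ℝ) ^ ((M:ℤ) - (p:ℤ)) := by
          rw [← zpow_natCast (2:ℝ) M, ← zpow_add₀ (two_ne_zero)]
          ring_nf
      _ ≤ ε := by
          rw [hεdef]
          apply zpow_le_zpow_right₀ one_le_two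
          have : (n:ℤ) + 8 * L + M ≤ p := by exact_mod_cast hp
          omega
  -- key: ε ≤ 2^{-n} * E
  have hεE : ε ≤ (2:ℝ) ^ (-(n:ℤ)) * E := by
    have hsplit : ε = (2:ℝ) ^ (-(n:ℤ)) * (2:ℝ) ^ (-(8 * L : ℤ)) := by
      rw [hεdef, ← zpow_add₀ (two_ne_zero)]
      ring_nf
    rw [hsplit]
    apply mul_le_mul_of_nonneg_left _ (by positivity)
    -- 2^{-8L} ≤ exp(-4L) ≤ E
    have h1 : Real.exp (4 * (L:ℝ)) ≤ (2:ℝ) ^ (8 * L) := by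
      have he4 : Real.exp 4 ≤ 256 := by
        have h1 : Real.exp 1 ≤ 2.7182818286 := Real.exp_one_lt_d9.le
        have h4 : Real.exp 4 = (Real.exp 1) ^ 4 := by
          rw [← Real.exp_nat_mul]; norm_num
        rw [h4]
        calc (Real.exp 1) ^ 4 ≤ (2.7182818286:ℝ) ^ 4 :=
              pow_le_pow_left₀ (Real.exp_pos 1).le h1 4
          _ ≤ 256 := by norm_num
      calc Real.exp (4 * (L:ℝ)) = (Real.exp 4) ^ L := by
            rw [mul_comm, Real.exp_nat_mul]
        _ ≤ (256:ℝ) ^ L := pow_le_pow_left₀ (Real.exp_pos 4).le he4 L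
        _ = (2:ℝ) ^ (8 * L) := by rw [pow_mul]; norm_num
    have h2 : (2:ℝ) ^ (-(8 * L : ℤ)) ≤ Real.exp (-(4 * (L:ℝ))) := by
      rw [Real.exp_neg, zpow_neg]
      apply inv_anti₀ (Real.exp_pos _)
      calc Real.exp (4 * (L:ℝ)) ≤ (2:ℝ) ^ (8 * L) := h1
        _ = (2:ℝ) ^ ((8 * L : ℕ) : ℤ) := by rw [zpow_natCast]
        _ = (2:ℝ) ^ (8 * L : ℤ) := by norm_num
    calc (2:ℝ) ^ (-(8 * L : ℤ)) ≤ Real.exp (-(4 * (L:ℝ))) := h2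
      _ ≤ E := by
          rw [hEdef]
          apply Real.exp_le_exp.2
          nlinarith [ht₀0, hL1]
  -- pieces
  have hB : |g t₀ v - g t₀ (h t₀)| ≤ (L:ℝ) * ((2:ℝ) ^ (-(n:ℤ)) * E) := by
    calc |g t₀ v - g t₀ (h t₀)| ≤ (L:ℝ) * |v - h t₀| := hg_lip t₀ ht₀mem v (h t₀)
      _ ≤ (L:ℝ) * ((2:ℝ) ^ (-(n:ℤ)) * E) := by
          apply mul_le_mul_of_nonneg_left hv (by positivity)
  have hC : |g t₀ (h t₀) - g τ (h t₀)| ≤ ε := by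
    apply hg_mod t₀ ht₀mem τ hτmem _ (h t₀)
    rw [abs_sub_comm, abs_of_nonneg hgap0]; exact hgap
  have hD : |g τ (h t₀) - g τ (h τ)| ≤ (L:ℝ) * ε := by
    calc |g τ (h t₀) - g τ (h τ)| ≤ (L:ℝ) * |h t₀ - h τ| := hg_lip τ hτmem _ _
      _ ≤ (L:ℝ) * ε := by
          rw [abs_sub_comm]
          exact mul_le_mul_of_nonneg_left hhdiff (by positivity)
  have htri : |w - g τ (h τ)| ≤ |w - g t₀ v| + |g t₀ v - g t₀ (h t₀)|
      + |g t₀ (h t₀) - g τ (h t₀)| + |g τ (h t₀) - g τ (h τ)| := by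
    calc |w - g τ (h τ)|
        = |(w - g t₀ v) + (g t₀ v - g t₀ (h t₀)) + (g t₀ (h t₀) - g τ (h t₀))
            + (g τ (h t₀) - g τ (h τ))| := by ring_nf
      _ ≤ _ := by
          apply (abs_add_le _ _).trans
          gcongr
          apply (abs_add_le _ _).trans
          gcongr
          exact abs_add_le _ _
  have hpos : (0:ℝ) < (2:ℝ) ^ (-(n:ℤ)) * E := by positivity
  nlinarith [htri, hw, hB, hC, hD, hεE, hpos, hL1]
end

section
/- One-step error propagation of the rounded Euler method: Assume p ≥ n + 8L + M. Let T be a natural number with T < 2^p, and let ṽ, w ∈ ℝ satisfy |ṽ − h(T/2^p)| ≤ 2^(−n)·exp(4L(T/2^p − 1)) and |w − g(T/2^p, ṽ)| ≤ 2^(−(n+8L)). Then for every Δ ∈ [0, 2^(−p)], one has |(ṽ + Δ·w) − h(T/2^p + Δ)| ≤ 2^(−n)·exp(4L(T/2^p + Δ − 1)). -/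
open Real Set

/-- One-step error propagation of the rounded Euler method. -/
theorem euler_method_one_step_error
    (L M n p : ℕ) (hL : 1 ≤ L)
    (g : ℝ → ℝ → ℝ) (h : ℝ → ℝ)
    (hg_cont : Continuous fun q : ℝ × ℝ => g q.1 q.2)
    (hg_lip : ∀ t ∈ Icc (0:ℝ) 1, ∀ y₀ y₁ : ℝ,
      |g t y₀ - g t y₁| ≤ (L : ℝ) * |y₀ - y₁|)
    (hg_bd : ∀ t ∈ Icc (0:ℝ) 1, ∀ y : ℝ, |g t y| ≤ 2 ^ M)
    (hg_mod : ∀ t ∈ Icc (0:ℝ) 1, ∀ t' ∈ Icc (0:ℝ) 1, |t - t'| ≤ (2:ℝ) ^ (-(p:ℤ)) →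
      ∀ y : ℝ, |g t y - g t' y| ≤ (2:ℝ) ^ (-((n:ℤ) + 8 * L)))
    (hh0 : h 0 = 0)
    (hh : ∀ t ∈ Icc (0:ℝ) 1, HasDerivAt h (g t (h t)) t)
    (hp : n + 8 * L + M ≤ p)
    (T : ℕ) (hT : T < 2 ^ p) (vtil w : ℝ)
    (hv : |vtil - h ((T : ℝ) / 2 ^ p)| ≤
      (2:ℝ) ^ (-(n:ℤ)) * Real.exp (4 * (L : ℝ) * ((T : ℝ) / 2 ^ p - 1)))
    (hw : |w - g ((T : ℝ) / 2 ^ p) vtil| ≤ (2:ℝ) ^ (-((n:ℤ) + 8 * L))) :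
    ∀ Δ ∈ Icc (0:ℝ) ((2:ℝ) ^ (-(p:ℤ))),
      |(vtil + Δ * w) - h ((T : ℝ) / 2 ^ p + Δ)| ≤
        (2:ℝ) ^ (-(n:ℤ)) * Real.exp (4 * (L : ℝ) * ((T : ℝ) / 2 ^ p + Δ - 1)) := by
  intro Δ hΔ
  obtain ⟨hΔ0, hΔδ⟩ := hΔ
  set t₀ : ℝ := (T:ℝ) / 2 ^ p with ht₀def
  set ε : ℝ := (2:ℝ) ^ (-(n:ℤ)) * Real.exp (4 * (L : ℝ) * (t₀ - 1)) with hεdef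
  set η : ℝ := (2:ℝ) ^ (-((n:ℤ) + 8 * L)) with hηdef
  have h2p : (0:ℝ) < 2 ^ p := by positivity
  have hδeq : (2:ℝ) ^ (-(p:ℤ)) = 1 / 2 ^ p := by
    rw [zpow_neg, zpow_natCast, one_div]
  have ht₀0 : 0 ≤ t₀ := by positivity
  have ht₀Δ1 : t₀ + Δ ≤ 1 := by
    have hT1 : ((T:ℝ) + 1) ≤ 2 ^ p := by
      have := Nat.succ_le_of_lt hT
      push_cast at this ⊢
      exact_mod_cast this
    have hΔδ' : Δ ≤ 1 / 2 ^ p := by rwa [hδeq] at hΔδ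
    rw [ht₀def]
    calc (T:ℝ)/2^p + Δ ≤ (T:ℝ)/2^p + 1/2^p := by linarith
      _ = ((T:ℝ)+1)/2^p := by ring
      _ ≤ 1 := by rw [div_le_one h2p]; exact hT1
  have ht₀Icc : t₀ ∈ Icc (0:ℝ) 1 := ⟨ht₀0, by linarith⟩
  have hsub : Icc t₀ (t₀+Δ) ⊆ Icc (0:ℝ) 1 := fun s hs =>
    ⟨le_trans ht₀0 hs.1, le_trans hs.2 ht₀Δ1⟩
  -- continuity of h and of s ↦ g s (h s) on [0,1]
  have hhc : ContinuousOn h (Icc (0:ℝ) 1) := fun t ht =>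
    ((hh t ht).continuousAt).continuousWithinAt
  have hGc : ContinuousOn (fun s => g s (h s)) (Icc (0:ℝ) 1) :=
    by have := hg_cont.comp_continuousOn (continuousOn_id.prodMk hhc); exact this
  -- Mean value bound for h
  have hM : ∀ s ∈ Icc (0:ℝ) 1, |h s - h t₀| ≤ (2:ℝ)^M * |s - t₀| := by
    intro s hs
    have := Convex.norm_image_sub_le_of_norm_hasDerivWithin_le
      (f := h) (f' := fun t => g t (h t)) (s := Icc (0:ℝ) 1) (C := (2:ℝ)^M)
      (fun t ht => (hh t ht).hasDerivWithinAt)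
      (fun t ht => by simpa using hg_bd t ht (h t)) (convex_Icc 0 1) ht₀Icc hs
    simpa [Real.norm_eq_abs] using this
  -- FTC
  have hInt : IntervalIntegrable (fun s => g s (h s)) MeasureTheory.volume t₀ (t₀+Δ) := by
    apply ContinuousOn.intervalIntegrable
    apply hGc.mono
    rw [uIcc_of_le (by linarith)]
    exact hsub
  have hFTC : h (t₀ + Δ) - h t₀ = ∫ s in t₀..(t₀+Δ), g s (h s) := by
    symm
    apply intervalIntegral.integral_eq_sub_of_hasDerivAt
    · intro s hs
      rw [uIcc_of_le (by linarith)] at hs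
      exact hh s (hsub hs)
    · exact hInt
  -- representation of the error
  have hrepr : vtil + Δ * w - h (t₀ + Δ)
      = (vtil - h t₀) + ∫ s in t₀..(t₀+Δ), (w - g s (h s)) := by
    rw [intervalIntegral.integral_sub intervalIntegrable_const hInt,
      intervalIntegral.integral_const, ← hFTC]
    simp [smul_eq_mul]
    ring
  -- basic positivity facts
  have hεpos : 0 < ε := by rw [hεdef]; positivity
  have hηpos : 0 < η := by rw [hηdef]; positivity
  have hL1 : (1:ℝ) ≤ (L:ℝ) := by exact_mod_cast hL
  -- η ≤ L * ε : 2^{-8L} ≤ exp(4L(t₀-1))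
  have hηε : η ≤ ε := by
    rw [hηdef, hεdef]
    have : (2:ℝ) ^ (-((n:ℤ) + 8 * L)) = (2:ℝ)^(-(n:ℤ)) * (2:ℝ)^(-(8*L:ℤ)) := by
      rw [← zpow_add₀ (by norm_num : (2:ℝ) ≠ 0)]; ring_nf
    rw [this]
    apply mul_le_mul_of_nonneg_left _ (by positivity)
    have h1 : (2:ℝ)^(-(8*L:ℤ)) = Real.exp (-(8*(L:ℝ)) * Real.log 2) := by
      rw [← Real.rpow_intCast, Real.rpow_def_of_pos (by norm_num : (0:ℝ) < 2)]
      push_cast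
      ring_nf
    rw [h1, Real.exp_le_exp]
    have hlog : (0.6931471803:ℝ) < Real.log 2 := Real.log_two_gt_d9
    have hLpos : (0:ℝ) < (L:ℝ) := by linarith
    nlinarith [mul_nonneg ht₀0 hLpos.le]
  -- time step bound : 2^M * 2^{-p} ≤ η
  have hstep : (2:ℝ)^M * (2:ℝ)^(-(p:ℤ)) ≤ η := by
    rw [hηdef, ← zpow_natCast (2:ℝ) M, ← zpow_add₀ (by norm_num : (2:ℝ) ≠ 0)]
    apply zpow_le_zpow_right₀ (by norm_num)
    have : (n:ℤ) + 8*L + M ≤ p := by exact_mod_cast hp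
    omega
  -- pointwise bound on the integrand
  have hptw : ∀ s ∈ Set.uIoc t₀ (t₀+Δ), ‖w - g s (h s)‖ ≤ 4 * L * ε := by
    intro s hs
    rw [Set.uIoc_of_le (by linarith)] at hs
    have hsIcc : s ∈ Icc t₀ (t₀+Δ) := ⟨hs.1.le, hs.2⟩
    have hs01 : s ∈ Icc (0:ℝ) 1 := hsub hsIcc
    have hst : |t₀ - s| ≤ (2:ℝ)^(-(p:ℤ)) := by
      rw [abs_sub_comm, abs_of_nonneg (by linarith [hs.1.le] : (0:ℝ) ≤ s - t₀)]
      have := hs.2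
      linarith
    have e1 : |w - g t₀ vtil| ≤ η := hw
    have e2 : |g t₀ vtil - g t₀ (h t₀)| ≤ (L:ℝ) * ε := by
      calc |g t₀ vtil - g t₀ (h t₀)| ≤ (L:ℝ) * |vtil - h t₀| := hg_lip t₀ ht₀Icc _ _
        _ ≤ (L:ℝ) * ε := by
            apply mul_le_mul_of_nonneg_left _ (by positivity)
            exact hv
    have e3 : |g t₀ (h t₀) - g s (h t₀)| ≤ η := hg_mod t₀ ht₀Icc s hs01 hst _
    have e4 : |g s (h t₀) - g s (h s)| ≤ (L:ℝ) * η := by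
      calc |g s (h t₀) - g s (h s)| ≤ (L:ℝ) * |h t₀ - h s| := hg_lip s hs01 _ _
        _ ≤ (L:ℝ) * η := by
            apply mul_le_mul_of_nonneg_left _ (by positivity)
            rw [abs_sub_comm]
            calc |h s - h t₀| ≤ (2:ℝ)^M * |s - t₀| := hM s hs01
              _ ≤ (2:ℝ)^M * (2:ℝ)^(-(p:ℤ)) := by
                  apply mul_le_mul_of_nonneg_left _ (by positivity)
                  rw [abs_of_nonneg (by linarith [hs.1.le] : (0:ℝ) ≤ s - t₀)]
                  linarith [hs.2]
              _ ≤ η := hstep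
    have : |w - g s (h s)| ≤ η + (L:ℝ)*ε + η + (L:ℝ)*η := by
      have d : w - g s (h s) = (w - g t₀ vtil) + (g t₀ vtil - g t₀ (h t₀))
          + (g t₀ (h t₀) - g s (h t₀)) + (g s (h t₀) - g s (h s)) := by ring
      have d1 := abs_add_le ((w - g t₀ vtil) + (g t₀ vtil - g t₀ (h t₀))
          + (g t₀ (h t₀) - g s (h t₀))) (g s (h t₀) - g s (h s))
      have d2 := abs_add_le ((w - g t₀ vtil) + (g t₀ vtil - g t₀ (h t₀)))
          (g t₀ (h t₀) - g s (h t₀))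
      have d3 := abs_add_le (w - g t₀ vtil) (g t₀ vtil - g t₀ (h t₀))
      rw [d]
      linarith
    rw [Real.norm_eq_abs]
    have hηLε : η ≤ (L:ℝ) * ε := le_trans hηε (by nlinarith)
    nlinarith
  -- integral bound
  have hIbd : |∫ s in t₀..(t₀+Δ), (w - g s (h s))| ≤ (4 * L * ε) * Δ := by
    have := intervalIntegral.norm_integral_le_of_norm_le_const hptw
    rw [Real.norm_eq_abs] at this
    calc |∫ s in t₀..(t₀+Δ), (w - g s (h s))| ≤ 4*L*ε * |t₀+Δ - t₀| := this
      _ = (4*L*ε) * Δ := by rw [abs_of_nonneg (by linarith : (0:ℝ) ≤ t₀+Δ-t₀)]; ring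
  -- assemble
  have hmain : |vtil + Δ * w - h (t₀ + Δ)| ≤ ε * (1 + 4*L*Δ) := by
    rw [hrepr]
    calc |(vtil - h t₀) + ∫ s in t₀..(t₀+Δ), (w - g s (h s))|
        ≤ |vtil - h t₀| + |∫ s in t₀..(t₀+Δ), (w - g s (h s))| := abs_add_le _ _
      _ ≤ ε + (4*L*ε)*Δ := add_le_add hv hIbd
      _ = ε * (1 + 4*L*Δ) := by ring
  have hexp : ε * (1 + 4*L*Δ) ≤ (2:ℝ) ^ (-(n:ℤ)) * Real.exp (4 * (L : ℝ) * (t₀ + Δ - 1)) := by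
    have h1 : (1:ℝ) + 4*L*Δ ≤ Real.exp (4*L*Δ) := by
      have := Real.add_one_le_exp (4*L*Δ); linarith
    calc ε * (1 + 4*L*Δ) ≤ ε * Real.exp (4*L*Δ) :=
          mul_le_mul_of_nonneg_left h1 hεpos.le
      _ = (2:ℝ) ^ (-(n:ℤ)) * Real.exp (4 * (L : ℝ) * (t₀ + Δ - 1)) := by
          rw [hεdef, mul_assoc, ← Real.exp_add]; ring_nf
  exact le_trans hmain hexp
end

section
/- Surjectivity of the signed digit representation ρ_sd of ℝ: For every x ∈ ℝ there exist k ∈ ℕ and a sequence a : ℤ → ℤ with a_i ∈ {−1, 0, 1} for all i ≤ k and a_i = 0 for all i > k, such that the series Σ_{j=0}^∞ a_{k−j}·2^(k−j) converges to x, and moreover either k = 0 or the pair (a_k, a_{k−1}) is one of (1,0), (1,1), (−1,0), (−1,−1). -/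
noncomputable def sdRem (y : ℝ) : ℕ → ℝ
  | 0 => y
  | j+1 =>
    let r := sdRem y j
    if (2:ℝ)^(-(j:ℤ)) ≤ r then r - (2:ℝ)^(-(j:ℤ))
    else if r ≤ -(2:ℝ)^(-(j:ℤ)) then r + (2:ℝ)^(-(j:ℤ))
    else r

noncomputable def sdDig (y : ℝ) (j : ℕ) : ℤ :=
  if (2:ℝ)^(-(j:ℤ)) ≤ sdRem y j then 1
  else if sdRem y j ≤ -(2:ℝ)^(-(j:ℤ)) then -1 else 0

lemma sdDig_mem (y : ℝ) (j : ℕ) : sdDig y j ∈ ({-1, 0, 1} : Set ℤ) := by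
  unfold sdDig; split_ifs <;> simp

lemma sdRem_succ (y : ℝ) (j : ℕ) :
    sdRem y (j+1) = sdRem y j - (sdDig y j : ℝ) * (2:ℝ)^(-(j:ℤ)) := by
  rw [sdRem]
  unfold sdDig
  split_ifs <;> push_cast <;> ring

lemma sdRem_bound (y : ℝ) (h : |y| ≤ 2) (j : ℕ) :
    |sdRem y j| ≤ 2 * (2:ℝ)^(-(j:ℤ)) := by
  induction j with
  | zero => simpa [sdRem] using h
  | succ j ih =>
    have ht : (0:ℝ) < (2:ℝ)^(-(j:ℤ)) := by positivity
    have h2 : (2:ℝ)^(-(j+1:ℕ):ℤ) = (2:ℝ)^(-(j:ℤ)) / 2 := by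
      push_cast
      rw [show -((j:ℤ)+1) = -(j:ℤ) + (-1) by ring, zpow_add₀ (by norm_num : (2:ℝ) ≠ 0)]
      norm_num
      ring
    rw [abs_le] at ih ⊢
    unfold sdRem
    simp only []
    split_ifs with h1 h2'
    · constructor
      · rw [h2]; linarith
      · rw [h2]; linarith
    · constructor
      · rw [h2]; linarith
      · rw [h2]; linarith
    · push_neg at h1 h2'
      constructor
      · rw [h2]; linarith
      · rw [h2]; linarith

lemma sdRem_eq (y : ℝ) (n : ℕ) :
    ∑ i ∈ Finset.range n, (sdDig y i : ℝ) * (2:ℝ)^(-(i:ℤ)) = y - sdRem y n := by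
  induction n with
  | zero => simp [sdRem]
  | succ n ih =>
    rw [Finset.sum_range_succ, ih, sdRem_succ]; ring

lemma sd_core (y : ℝ) (h : |y| ≤ 2) :
    ∃ b : ℕ → ℤ, (∀ j, b j ∈ ({-1, 0, 1} : Set ℤ)) ∧
      HasSum (fun j : ℕ => (b j : ℝ) * (2:ℝ)^(-(j:ℤ))) y := by
  refine ⟨sdDig y, sdDig_mem y, ?_⟩
  have hb : ∀ j : ℕ, ‖(sdDig y j : ℝ) * (2:ℝ)^(-(j:ℤ))‖ ≤ (1/2:ℝ)^j := by
    intro j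
    have hd : |(sdDig y j : ℝ)| ≤ 1 := by
      have := sdDig_mem y j
      simp only [Set.mem_insert_iff, Set.mem_singleton_iff] at this
      rcases this with h | h | h <;> simp [h]
    have h2 : (2:ℝ)^(-(j:ℤ)) = (1/2:ℝ)^j := by
      rw [zpow_neg, zpow_natCast, one_div, inv_pow]
    rw [Real.norm_eq_abs, abs_mul, h2, abs_of_pos (pow_pos (by norm_num : (0:ℝ) < 1/2) j)]
    calc |(sdDig y j : ℝ)| * (1/2:ℝ)^j ≤ 1 * (1/2:ℝ)^j :=
          mul_le_mul_of_nonneg_right hd (by positivity)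
      _ = (1/2:ℝ)^j := one_mul _
  have hsum : Summable (fun j : ℕ => (sdDig y j : ℝ) * (2:ℝ)^(-(j:ℤ))) :=
    Summable.of_norm_bounded (summable_geometric_of_lt_one (by norm_num) (by norm_num)) hb
  have hHS := hsum.hasSum
  have htend := hHS.tendsto_sum_nat
  have hrem : Filter.Tendsto (fun n => sdRem y n) Filter.atTop (nhds 0) := by
    apply squeeze_zero_norm (fun n => sdRem_bound y h n)
    have : Filter.Tendsto (fun n : ℕ => 2 * (1/2:ℝ)^n) Filter.atTop (nhds (2 * 0)) :=
      (tendsto_pow_atTop_nhds_zero_of_lt_one (by norm_num) (by norm_num)).const_mul 2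
    simp only [mul_zero] at this
    convert this using 2 with n
    rw [zpow_neg, zpow_natCast, one_div, inv_pow]
  have htend2 : Filter.Tendsto (fun n => ∑ i ∈ Finset.range n, (sdDig y i : ℝ) * (2:ℝ)^(-(i:ℤ)))
      Filter.atTop (nhds y) := by
    simp only [sdRem_eq]
    have := Filter.Tendsto.const_sub y hrem
    simpa using this
  have := tendsto_nhds_unique htend htend2
  rwa [this] at hHS

lemma sd_pos (x : ℝ) (hx : 2 < x) :
    ∃ (k : ℕ) (a : ℤ → ℤ), k ≠ 0 ∧
      (∀ i : ℤ, i ≤ (k : ℤ) → a i ∈ ({-1, 0, 1} : Set ℤ)) ∧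
      (∀ i : ℤ, (k : ℤ) < i → a i = 0) ∧
      HasSum (fun j : ℕ => (a ((k : ℤ) - j) : ℝ) * (2:ℝ) ^ ((k : ℤ) - j)) x ∧
      a (k : ℤ) = 1 ∧ a ((k : ℤ) - 1) = 0 := by
  have hex : ∃ n : ℕ, x ≤ (2:ℝ)^n := by
    obtain ⟨n, hn⟩ := pow_unbounded_of_one_lt x (by norm_num : (1:ℝ) < 2)
    exact ⟨n, hn.le⟩
  classical
  set k := Nat.find hex with hkdef
  have hk : x ≤ (2:ℝ)^k := Nat.find_spec hex
  have hk2 : 2 ≤ k := by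
    by_contra hcon
    push_neg at hcon
    interval_cases k
    · have := hk; norm_num at this; linarith
    · have := hk; norm_num at this; linarith
  have hkm : (2:ℝ)^(k-1) < x := by
    have := Nat.find_min hex (m := k - 1) (by omega)
    push_neg at this
    exact this
  have hpow : (2:ℝ)^k = 2 * (2:ℝ)^(k-1) := by
    rw [← pow_succ']
    congr 1
    omega
  have h2kpos : (0:ℝ) < (2:ℝ)^k := by positivity
  set y' : ℝ := 4 * (x / (2:ℝ)^k - 1) with hy'
  have hy'le : |y'| ≤ 2 := by
    have hhalf : (1:ℝ)/2 ≤ x / 2^k := by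
      rw [le_div_iff₀ h2kpos]; nlinarith
    have hone : x / 2^k ≤ 1 := div_le_one_of_le₀ hk h2kpos.le
    rw [abs_le, hy']
    constructor <;> nlinarith
  obtain ⟨b, hbmem, hbsum⟩ := sd_core y' hy'le
  refine ⟨k, fun i => if i = (k:ℤ) then 1 else if i = (k:ℤ)-1 then 0
    else if i ≤ (k:ℤ)-2 then b (((k:ℤ)-2-i).toNat) else 0, by omega, ?_, ?_, ?_, ?_, ?_⟩
  · intro i hi
    dsimp only
    split_ifs with h1 h2 h3
    · simp
    · simp
    · exact hbmem _
    · simp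
  · intro i hi
    dsimp only
    split_ifs with h1 h2 h3
    · omega
    · omega
    · omega
    · rfl
  · set a : ℤ → ℤ := fun i => if i = (k:ℤ) then 1 else if i = (k:ℤ)-1 then 0
      else if i ≤ (k:ℤ)-2 then b (((k:ℤ)-2-i).toNat) else 0 with ha
    set f : ℕ → ℝ := fun j => (a ((k:ℤ) - j) : ℝ) * (2:ℝ)^((k:ℤ) - j) with hf
    have hshift : (fun n : ℕ => f (n+2)) =
        fun j : ℕ => (2:ℝ)^((k:ℤ)-2) * ((b j : ℝ) * (2:ℝ)^(-(j:ℤ))) := by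
      funext j
      have e1 : (k:ℤ) - ((j:ℕ)+2:ℕ) ≠ (k:ℤ) := by push_cast; omega
      have e2 : (k:ℤ) - ((j:ℕ)+2:ℕ) ≠ (k:ℤ) - 1 := by push_cast; omega
      have e3 : (k:ℤ) - ((j:ℕ)+2:ℕ) ≤ (k:ℤ) - 2 := by push_cast; omega
      have e4 : ((k:ℤ)-2-((k:ℤ) - ((j:ℕ)+2:ℕ))) = (j:ℤ) := by push_cast; ring
      have e5 : a ((k:ℤ) - ((j:ℕ)+2:ℕ)) = b j := by
        rw [ha]
        simp only [if_neg e1, if_neg e2, if_pos e3, e4, Int.toNat_natCast]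
      rw [hf]
      simp only [e5]
      rw [show (k:ℤ) - ((j:ℕ)+2:ℕ) = ((k:ℤ)-2) + (-(j:ℤ)) by push_cast; ring,
        zpow_add₀ (by norm_num : (2:ℝ) ≠ 0)]
      ring
    have hs2 := hbsum.mul_left ((2:ℝ)^((k:ℤ)-2))
    rw [← hshift] at hs2
    have hs3 := (hasSum_nat_add_iff 2).mp hs2
    have ha0 : a (k:ℤ) = 1 := by rw [ha]; simp
    have ha1 : a ((k:ℤ)-1) = 0 := by
      rw [ha]
      have h1 : (k:ℤ) - 1 ≠ (k:ℤ) := by omega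
      simp [h1]
    have hf0 : f 0 = (2:ℝ)^(k:ℤ) := by
      rw [hf]; simp [ha0]
    have hf1 : f 1 = 0 := by
      rw [hf]
      have e : ((k:ℤ) - ((1:ℕ):ℤ)) = (k:ℤ) - 1 := by norm_num
      simp only [e, ha1]
      simp
    have hsum2 : ∑ i ∈ Finset.range 2, f i = (2:ℝ)^(k:ℤ) := by
      rw [Finset.sum_range_succ, Finset.sum_range_one, hf0, hf1, add_zero]
    rw [hsum2] at hs3
    have hval : (2:ℝ)^((k:ℤ)-2) * y' + (2:ℝ)^(k:ℤ) = x := by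
      have hz : (2:ℝ)^((k:ℤ)-2) = (2:ℝ)^(k:ℤ) / 4 := by
        rw [zpow_sub₀ (by norm_num : (2:ℝ) ≠ 0)]
        norm_num
      have hzk : (2:ℝ)^(k:ℤ) = (2:ℝ)^k := by
        rw [zpow_natCast]
      rw [hz, hzk, hy']
      field_simp
      ring
    rwa [hval] at hs3
  · dsimp only
    simp
  · dsimp only
    have h1 : (k:ℤ) - 1 ≠ (k:ℤ) := by omega
    simp [h1]

/-- Surjectivity of the signed digit representation of `ℝ`: every real number
has a valid signed-digit name. -/
theorem signed_digit_representation_surjective (x : ℝ) :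
    ∃ (k : ℕ) (a : ℤ → ℤ),
      (∀ i : ℤ, i ≤ (k : ℤ) → a i ∈ ({-1, 0, 1} : Set ℤ)) ∧
      (∀ i : ℤ, (k : ℤ) < i → a i = 0) ∧
      HasSum (fun j : ℕ => (a ((k : ℤ) - j) : ℝ) * (2:ℝ) ^ ((k : ℤ) - j)) x ∧
      (k = 0 ∨ (a k, a ((k : ℤ) - 1)) ∈
        ({(1, 0), (1, 1), (-1, 0), (-1, -1)} : Set (ℤ × ℤ))) := by
  rcases le_or_gt |x| 2 with h | h
  · obtain ⟨b, hbmem, hbsum⟩ := sd_core x h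
    refine ⟨0, fun i => if i ≤ 0 then b ((-i).toNat) else 0, ?_, ?_, ?_, Or.inl rfl⟩
    · intro i hi
      dsimp only
      split_ifs
      · exact hbmem _
      · simp
    · intro i hi
      dsimp only
      rw [if_neg (by push_cast at hi; omega)]
    · convert hbsum using 2 with j
      dsimp only
      simp only [Nat.cast_zero, zero_sub]
      rw [if_pos (by omega : -(j:ℤ) ≤ 0)]
      simp
  · rcases lt_abs.mp h with hpos | hneg
    · obtain ⟨k, a, hk0, hmem, hzero, hsum, hak, hak1⟩ := sd_pos x hpos
      exact ⟨k, a, hmem, hzero, hsum, Or.inr (by simp [hak, hak1])⟩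
    · obtain ⟨k, a, hk0, hmem, hzero, hsum, hak, hak1⟩ := sd_pos (-x) (by linarith)
      refine ⟨k, fun i => -(a i), ?_, ?_, ?_, Or.inr ?_⟩
      · intro i hi
        have := hmem i hi
        simp only [Set.mem_insert_iff, Set.mem_singleton_iff] at this ⊢
        rcases this with h | h | h <;> simp [h]
      · intro i hi
        simp [hzero i hi]
      · have := hsum.neg
        simp only [neg_neg] at this
        convert this using 2 with j
        · rfl
        · dsimp only
          push_cast
          ring
      · simp [hak, hak1]
end

section
/- Symmetry of the solution of an initial value problem with antisymmetric right-hand side: Let a ≤ b be real numbers and let g : ℝ → ℝ → ℝ be continuous, Lipschitz in its second argument (there is K ≥ 0 with |g(t,y₀) − g(t,y₁)| ≤ K·|y₀ − y₁| for all t ∈ [a,b] and y₀, y₁ ∈ ℝ), and antisymmetric about the midpoint of [a,b] in its first argument: g(a + b − t, y) = −g(t, y) for all t ∈ [a,b] and y ∈ ℝ. If h : ℝ → ℝ satisfies, for every t ∈ [a,b], that h has derivative g(t, h(t)) at t, then h(a + b − t) = h(t) for all t ∈ [a,b]; in particular h(b) = h(a). -/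
open Set

/-- Symmetry of the solution of an initial value problem whose right-hand side is
antisymmetric about the midpoint of `[a,b]` in its first argument: the solution
takes the same value at `t` and at its mirror point `a + b - t`; in particular
`h b = h a`. -/
theorem ivp_solution_symmetric
    (a b : ℝ) (hab : a ≤ b) (g : ℝ → ℝ → ℝ) (K : ℝ) (hK : 0 ≤ K)
    (hg_cont : Continuous fun q : ℝ × ℝ => g q.1 q.2)
    (hg_lip : ∀ t ∈ Icc a b, ∀ y₀ y₁ : ℝ, |g t y₀ - g t y₁| ≤ K * |y₀ - y₁|)
    (hg_anti : ∀ t ∈ Icc a b, ∀ y : ℝ, g (a + b - t) y = -g t y)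
    (h : ℝ → ℝ) (hh : ∀ t ∈ Icc a b, HasDerivAt h (g t (h t)) t) :
    (∀ t ∈ Icc a b, h (a + b - t) = h t) ∧ h b = h a := by
  set m : ℝ := (a + b) / 2 with hm
  have ham : a ≤ m := by rw [hm]; linarith
  have hmb : m ≤ b := by rw [hm]; linarith
  -- clamped vector field
  set v : ℝ → ℝ → ℝ := fun t y => g (min b (max a t)) y with hv_def
  have hclamp : ∀ t : ℝ, min b (max a t) ∈ Icc a b := by
    intro t
    constructor
    · exact le_min hab (le_max_left a t)
    · exact min_le_left _ _
  have hclamp_eq : ∀ t ∈ Icc a b, min b (max a t) = t := by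
    intro t ht
    rw [max_eq_right ht.1, min_eq_right ht.2]
  have hv : ∀ t : ℝ, LipschitzOnWith K.toNNReal (v t) univ := by
    intro t
    apply LipschitzOnWith.of_dist_le_mul
    intro y₀ _ y₁ _
    simp only [Real.dist_eq, hv_def]
    calc |g (min b (max a t)) y₀ - g (min b (max a t)) y₁| ≤ K * |y₀ - y₁| :=
          hg_lip _ (hclamp t) y₀ y₁
      _ = K.toNNReal * |y₀ - y₁| := by rw [Real.coe_toNNReal K hK]
  -- the reflected solution
  set f : ℝ → ℝ := fun t => h (a + b - t) with hf_def
  have hmirror : ∀ t ∈ Icc a b, a + b - t ∈ Icc a b := by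
    intro t ht
    exact ⟨by linarith [ht.2], by linarith [ht.1]⟩
  have hf' : ∀ t ∈ Icc a b, HasDerivAt f (g t (f t)) t := by
    intro t ht
    have h1 : HasDerivAt (fun t : ℝ => a + b - t) (-1) t := by
      simpa using (hasDerivAt_id t).const_sub (a + b)
    have h2 := (hh _ (hmirror t ht)).comp t h1
    have h3 : g (a + b - t) (h (a + b - t)) * (-1) = g t (f t) := by
      rw [hg_anti t ht]; simp [hf_def]
    rw [h3] at h2
    exact h2
  -- uniqueness on [m, b]
  have heq : EqOn f h (Icc m b) := by
    apply ODE_solution_unique_of_mem_Icc_right (v := v) (s := fun _ => univ) (fun t _ => hv t)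
    · intro t ht
      exact ((hf' t ⟨ham.trans ht.1, ht.2⟩).continuousAt).continuousWithinAt
    · intro t ht
      have ht' : t ∈ Icc a b := ⟨ham.trans ht.1, ht.2.le⟩
      have := (hf' t ht').hasDerivWithinAt (s := Ici t)
      simpa only [hv_def, hclamp_eq t ht'] using this
    · intro t _; trivial
    · intro t ht
      exact ((hh t ⟨ham.trans ht.1, ht.2⟩).continuousAt).continuousWithinAt
    · intro t ht
      have ht' : t ∈ Icc a b := ⟨ham.trans ht.1, ht.2.le⟩
      have := (hh t ht').hasDerivWithinAt (s := Ici t)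
      simpa only [hv_def, hclamp_eq t ht'] using this
    · intro t _; trivial
    · show h (a + b - m) = h m
      have : a + b - m = m := by rw [hm]; ring
      rw [this]
  have key : ∀ t ∈ Icc a b, h (a + b - t) = h t := by
    intro t ht
    rcases le_total m t with hmt | htm
    · exact heq ⟨hmt, ht.2⟩
    · have hs : a + b - t ∈ Icc m b := ⟨by rw [hm]; linarith, by linarith [ht.1]⟩
      have := heq hs
      simp only [hf_def] at this
      have h4 : a + b - (a + b - t) = t := by ring
      rw [h4] at this
      exact this.symm
  refine ⟨key, ?_⟩
  have := key b ⟨hab, le_refl b⟩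
  simpa using this.symm
end

section
/- Correctness of the approximation scheme for multiplication of real numbers: Let k, m ∈ ℕ with k ≥ 1, and let s, t, a, b ∈ ℝ satisfy |s| ≤ 2^(k−1), |t| ≤ 2^(k−1), |a − s| ≤ 2^(−(m+k+1)) and |b − t| ≤ 2^(−(m+k+1)). Then |a·b − s·t| < 2^(−m). -/
/-- Correctness of the approximation scheme for multiplication of real numbers:
approximating both factors with precision `2^(-(m+k+1))`, where `2^(k-1)` bounds
their magnitudes, approximates the product with precision `2^(-m)`. -/
theorem multiplication_approximation_correct
    (k m : ℕ) (hk : 1 ≤ k) (s t a b : ℝ)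
    (hs : |s| ≤ 2 ^ (k - 1)) (ht : |t| ≤ 2 ^ (k - 1))
    (ha : |a - s| ≤ (2:ℝ) ^ (-((m:ℤ) + k + 1)))
    (hb : |b - t| ≤ (2:ℝ) ^ (-((m:ℤ) + k + 1))) :
    |a * b - s * t| < (2:ℝ) ^ (-(m:ℤ)) := by
  set ε : ℝ := (2:ℝ) ^ (-((m:ℤ) + k + 1)) with hε
  have hεpos : 0 < ε := zpow_pos (by norm_num) _
  have hpow : (2:ℝ) ^ (k - 1) = (2:ℝ) ^ ((k:ℤ) - 1) := by
    rw [← zpow_natCast]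
    congr 1
    omega
  have h1 : (2:ℝ) ^ (k - 1) * ε = (2:ℝ) ^ (-(m:ℤ) - 2) := by
    rw [hpow, hε, ← zpow_add₀ (by norm_num : (2:ℝ) ≠ 0)]
    congr 1
    ring
  have h2 : ε ≤ (2:ℝ) ^ (-(m:ℤ) - 2) :=
    zpow_le_zpow_right₀ (by norm_num) (by omega)
  have h3 : ε ≤ 1 := by
    calc ε ≤ (2:ℝ) ^ (0:ℤ) := zpow_le_zpow_right₀ (by norm_num) (by omega)
    _ = 1 := by norm_num
  have h4 : (2:ℝ) ^ (-(m:ℤ) - 2) * 4 = (2:ℝ) ^ (-(m:ℤ)) := by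
    rw [show (4:ℝ) = (2:ℝ) ^ (2:ℤ) by norm_num,
      ← zpow_add₀ (by norm_num : (2:ℝ) ≠ 0)]
    congr 1
    ring
  have hb' : |b| ≤ (2:ℝ) ^ (k - 1) + ε := by
    calc |b| = |(b - t) + t| := by ring_nf
    _ ≤ |b - t| + |t| := abs_add_le _ _
    _ ≤ ε + 2 ^ (k - 1) := add_le_add hb ht
    _ = _ := by ring
  have key : |a * b - s * t| ≤ |a - s| * |b| + |s| * |b - t| := by
    calc |a * b - s * t| = |(a - s) * b + s * (b - t)| := by ring_nf
    _ ≤ |(a - s) * b| + |s * (b - t)| := abs_add_le _ _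
    _ = |a - s| * |b| + |s| * |b - t| := by rw [abs_mul, abs_mul]
  have hbnn : (0:ℝ) ≤ |b| := abs_nonneg _
  have hsnn : (0:ℝ) ≤ |s| := abs_nonneg _
  have hann : (0:ℝ) ≤ |a - s| := abs_nonneg _
  nlinarith [mul_le_mul ha hb' hbnn hεpos.le,
    mul_le_mul hs hb (abs_nonneg _) (le_trans hsnn hs),
    sq_nonneg ε]
end

section
/- Regularity of the pairing of regular functions: Let φ and ψ be regular functions on binary strings. Define ⟨φ, ψ⟩ by: ⟨φ, ψ⟩(0·u) = φ(u)·1·0^{|ψ(u)|} and ⟨φ, ψ⟩(1·u) = ψ(u)·1·0^{|φ(u)|} for every string u (where · denotes concatenation, b·u prepends the bit b to u, and 0^j is the string of j zeros), and ⟨φ, ψ⟩(ε) = φ(ε)·1·0^{|ψ(ε)|} on the empty string ε. Then ⟨φ, ψ⟩ is regular, and |⟨φ, ψ⟩(b·u)| = |φ(u)| + |ψ(u)| + 1 for every bit b and every string u. -/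
/-- A total function on binary strings is regular (length-monotone) if it
preserves relative lengths of strings. -/
def Regular (φ : List Bool → List Bool) : Prop :=
  ∀ u v : List Bool, u.length ≤ v.length → (φ u).length ≤ (φ v).length

/-- Regularity of the pairing of regular functions: if `φ` and `ψ` are regular
and `χ` is the pairing `⟨φ, ψ⟩` (with `χ(0·u) = φ(u)·1·0^{|ψ(u)|}`,
`χ(1·u) = ψ(u)·1·0^{|φ(u)|}`, and `χ(ε) = φ(ε)·1·0^{|ψ(ε)|}`, where the bit `0`
is `false` and the bit `1` is `true`), then `χ` is regular and
`|χ(b·u)| = |φ(u)| + |ψ(u)| + 1` for every bit `b` and string `u`. -/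
theorem pairing_of_regular_functions_regular
    (φ ψ χ : List Bool → List Bool)
    (hφ : Regular φ) (hψ : Regular ψ)
    (hχ₀ : ∀ u : List Bool,
      χ (false :: u) = φ u ++ true :: List.replicate (ψ u).length false)
    (hχ₁ : ∀ u : List Bool,
      χ (true :: u) = ψ u ++ true :: List.replicate (φ u).length false)
    (hχε : χ [] = φ [] ++ true :: List.replicate (ψ []).length false) :
    Regular χ ∧
    ∀ (b : Bool) (u : List Bool),
      (χ (b :: u)).length = (φ u).length + (ψ u).length + 1 := by
  have key : ∀ w : List Bool,
      (χ w).length = (φ w.tail).length + (ψ w.tail).length + 1 := by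
    intro w
    match w with
    | [] => simp [hχε]; omega
    | false :: u => simp [hχ₀ u]; omega
    | true :: u => simp [hχ₁ u]; omega
  constructor
  · intro u v huv
    rw [key u, key v]
    have ht : u.tail.length ≤ v.tail.length := by
      rcases u with _ | ⟨a, u⟩ <;> rcases v with _ | ⟨b, v⟩ <;> simp_all <;> omega
    have := hφ u.tail v.tail ht
    have := hψ u.tail v.tail ht
    omega
  · intro b u
    cases b
    · simp [hχ₀ u]; omega
    · simp [hχ₁ u]; omega
end
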